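/- Let b₁, b₂, b₃ be linearly independent vectors in ℝⁿ with n ≥ 3, and suppose the cosine of the angle between b₁ and b₃ and the cosine of the angle between b₂ and b₃ are both equal to some α > 0. Let ξ be the angle between z = b₁ + b₂ and b₃. Then |cos ξ| > α; consequently the cosine of the angle between b₃ and the plane span_ℝ{b₁, b₂} is strictly greater than α, i.e., b₃ makes a smaller angle with that plane than with each of b₁ and b₂. -/

import Mathlib

open scoped RealInnerProductSpace
open Submodule Metric MeasureTheory

noncomputable section

abbrev Evec (n : ℕ) := EuclideanSpace ℝ (Fin n)

/-- The lattice generated (over ℤ) by the vectors `b 0, …, b (n-1)`. -/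
def latticeOf {n : ℕ} (b : Fin n → Evec n) : Set (Evec n) :=
  {x | ∃ c : Fin n → ℤ, x = ∑ i, (c i : ℝ) • b i}

/-- The set of minimal vectors `S(L)` of a lattice `L`. -/
def minVecs {n : ℕ} (L : Set (Evec n)) : Set (Evec n) :=
  {x | x ∈ L ∧ x ≠ 0 ∧ ∀ y ∈ L, y ≠ 0 → ‖x‖ ≤ ‖y‖}

/-- `L` is well-rounded: its minimal vectors span `ℝⁿ`. -/
def IsWellRounded {n : ℕ} (L : Set (Evec n)) : Prop :=
  Submodule.span ℝ (minVecs L) = ⊤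

/-- `L` has minimal norm `m`. -/
def hasMinNorm {n : ℕ} (L : Set (Evec n)) (m : ℝ) : Prop :=
  (∃ x ∈ L, x ≠ 0 ∧ ‖x‖ = m) ∧ ∀ x ∈ L, x ≠ 0 → m ≤ ‖x‖

/-- The angle in `[0, π/2]` between a vector `v` and a subspace `V`,
whose cosine is `‖proj_V v‖ / ‖v‖`. -/
def subAngle {n : ℕ} (v : Evec n) (V : Submodule ℝ (Evec n)) : ℝ :=
  Real.arccos (‖(orthogonalProjection V v : Evec n)‖ / ‖v‖)

/-- The ordered basis `b` is weakly θ-orthogonal. -/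
def WeaklyOrth {n : ℕ} (θ : ℝ) (b : Fin n → Evec n) : Prop :=
  ∀ i : Fin n, 0 < (i : ℕ) →
    θ ≤ subAngle (b i) (Submodule.span ℝ (b '' {j | j < i}))

/-- The basis `b` is θ-orthogonal: every ordering of it is weakly θ-orthogonal. -/
def Orth {n : ℕ} (θ : ℝ) (b : Fin n → Evec n) : Prop :=
  ∀ σ : Equiv.Perm (Fin n), WeaklyOrth θ (b ∘ σ)

/-- A nearly orthogonal basis is a π/3-orthogonal basis. -/
def NearlyOrth {n : ℕ} (b : Fin n → Evec n) : Prop := Orth (Real.pi / 3) b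

/-- A weakly nearly orthogonal basis is a weakly π/3-orthogonal basis. -/
def WeaklyNearlyOrth {n : ℕ} (b : Fin n → Evec n) : Prop := WeaklyOrth (Real.pi / 3) b

/-- Coherence `C(L)` of a lattice. -/
def coherence {n : ℕ} (L : Set (Evec n)) : ℝ :=
  sSup {t | ∃ x ∈ minVecs L, ∃ y ∈ minVecs L, x ≠ y ∧ x ≠ -y ∧
    t = abs ⟪x, y⟫ / (‖x‖ * ‖y‖)}

/-- `μ(B)`: minimal absolute cosine of angles between distinct basis vectors. -/
def muB {n : ℕ} (b : Fin n → Evec n) : ℝ :=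
  sInf {t | ∃ i j : Fin n, i ≠ j ∧ t = abs ⟪b i, b j⟫ / (‖b i‖ * ‖b j‖)}

/-- `ν(B)`: maximal absolute cosine of angles between distinct basis vectors. -/
def nuB {n : ℕ} (b : Fin n → Evec n) : ℝ :=
  sSup {t | ∃ i j : Fin n, i ≠ j ∧ t = abs ⟪b i, b j⟫ / (‖b i‖ * ‖b j‖)}

/-- The determinant of the lattice with basis `b`. -/
def latDet {n : ℕ} (b : Fin n → Evec n) : ℝ :=
  |(Matrix.of fun i j : Fin n => b j i).det|

/-- Packing density of a lattice with basis `b` and minimal norm `m`: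
`ω_n · m^n / (2^n · det L)`. -/
def packDensity {n : ℕ} (m : ℝ) (b : Fin n → Evec n) : ℝ :=
  (volume (ball (0 : Evec n) 1)).toReal * m ^ n / (2 ^ n * latDet b)

/-- `L` is strongly eutactic. -/
def StronglyEutactic {n : ℕ} (L : Set (Evec n)) : Prop :=
  ∃ c : ℝ, 0 < c ∧ ∀ v : Evec n, ‖v‖ ^ 2 = c * ∑ᶠ x ∈ minVecs L, ⟪v, x⟫ ^ 2

/-- `L` is perfect: `{x xᵀ : x ∈ S(L)}` spans the symmetric `n × n` matrices. -/
def IsPerfect {n : ℕ} (L : Set (Evec n)) : Prop :=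
  ∀ A : Matrix (Fin n) (Fin n) ℝ, A.IsSymm →
    A ∈ Submodule.span ℝ ((fun x : Evec n => Matrix.of fun i j => x i * x j) '' minVecs L)

end

/-- if `b₃` makes equal acute angles with `b₁` and `b₂`, it makes a
smaller angle with `b₁ + b₂` and with the plane spanned by `b₁, b₂`. -/
theorem stmt_1 {n : ℕ} (hn : 3 ≤ n) (b₁ b₂ b₃ : Evec n)
    (hli : LinearIndependent ℝ ![b₁, b₂, b₃]) (α : ℝ) (hα : 0 < α)
    (h13 : Real.cos (InnerProductGeometry.angle b₁ b₃) = α)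
    (h23 : Real.cos (InnerProductGeometry.angle b₂ b₃) = α) :
    α < |Real.cos (InnerProductGeometry.angle (b₁ + b₂) b₃)| ∧
    α < Real.cos (subAngle b₃ (Submodule.span ℝ {b₁, b₂})) := by
  have hne1 : b₁ ≠ 0 := by simpa using hli.ne_zero 0
  have hne2 : b₂ ≠ 0 := by simpa using hli.ne_zero 1
  have hne3 : b₃ ≠ 0 := by simpa using hli.ne_zero 2
  have hb1 : (0:ℝ) < ‖b₁‖ := norm_pos_iff.2 hne1
  have hb2 : (0:ℝ) < ‖b₂‖ := norm_pos_iff.2 hne2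
  have hb3 : (0:ℝ) < ‖b₃‖ := norm_pos_iff.2 hne3
  have hpair : LinearIndependent ℝ ![b₁, b₂] := by
    have h := hli.comp ![0, 1] (by decide)
    convert h using 1
    ext i; fin_cases i <;> rfl
  rw [LinearIndependent.pair_iff] at hpair
  have hray : ¬ SameRay ℝ b₁ b₂ := by
    intro h
    obtain ⟨r, s, hr, hs, hrs⟩ := h.exists_pos hne1 hne2
    have := (hpair r (-s) (by rw [neg_smul, hrs]; abel)).1
    exact hr.ne' this
  have hzne : b₁ + b₂ ≠ 0 := by
    intro h
    have := (hpair 1 1 (by simpa using h)).1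
    norm_num at this
  have hz : (0:ℝ) < ‖b₁ + b₂‖ := norm_pos_iff.2 hzne
  have hzlt : ‖b₁ + b₂‖ < ‖b₁‖ + ‖b₂‖ := norm_add_lt_of_not_sameRay hray
  have e13 : ⟪b₁, b₃⟫ = α * (‖b₁‖ * ‖b₃‖) := by
    have h := InnerProductGeometry.cos_angle b₁ b₃
    rw [h13, eq_div_iff (by positivity)] at h
    linarith
  have e23 : ⟪b₂, b₃⟫ = α * (‖b₂‖ * ‖b₃‖) := by
    have h := InnerProductGeometry.cos_angle b₂ b₃
    rw [h23, eq_div_iff (by positivity)] at h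
    linarith
  have hzin : ⟪b₁ + b₂, b₃⟫ = α * ((‖b₁‖ + ‖b₂‖) * ‖b₃‖) := by
    rw [inner_add_left, e13, e23]; ring
  have hcos : Real.cos (InnerProductGeometry.angle (b₁ + b₂) b₃)
      = α * (‖b₁‖ + ‖b₂‖) / ‖b₁ + b₂‖ := by
    rw [InnerProductGeometry.cos_angle, hzin]
    field_simp
  have hgt : α < α * (‖b₁‖ + ‖b₂‖) / ‖b₁ + b₂‖ := by
    rw [lt_div_iff₀ hz]
    nlinarith
  refine ⟨by rw [hcos]; exact hgt.trans_le (le_abs_self _), ?_⟩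
  set V := Submodule.span ℝ ({b₁, b₂} : Set (Evec n)) with hV
  set p := (orthogonalProjection V b₃ : Evec n) with hp
  have hzV : b₁ + b₂ ∈ V :=
    add_mem (subset_span (by simp)) (subset_span (by simp))
  have hip : ⟪b₃ - p, b₁ + b₂⟫ = 0 :=
    Submodule.starProjection_inner_eq_zero b₃ _ hzV
  have hinner : ⟪p, b₁ + b₂⟫ = α * ((‖b₁‖ + ‖b₂‖) * ‖b₃‖) := by
    rw [inner_sub_left] at hip
    rw [← real_inner_comm (b₁ + b₂) b₃] at hzin
    linarith
  have hCS : ⟪p, b₁ + b₂⟫ ≤ ‖p‖ * ‖b₁ + b₂‖ := real_inner_le_norm _ _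
  have hple : ‖p‖ ≤ ‖b₃‖ := by
    have := (orthogonalProjection V).le_of_opNorm_le (orthogonalProjection_norm_le V) b₃
    simpa [hp] using this
  have hcos2 : Real.cos (subAngle b₃ V) = ‖p‖ / ‖b₃‖ := by
    rw [subAngle, Real.cos_arccos (le_trans (by norm_num) (div_nonneg (norm_nonneg _) (norm_nonneg _))) (div_le_one_of_le₀ hple hb3.le)]
  rw [hcos2, lt_div_iff₀ hb3]
  nlinarith [mul_lt_mul_of_pos_left hzlt (mul_pos hα hb3), hz, hCS, hinner]
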